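/- Let A, B, C ∈ ℝ^{n×n} with A and C invertible. If for every diagonal matrix D = diag(d₁,…,d_{n²}) ∈ ℝ^{n²×n²} with dᵢ ∈ [−1,1] the spectral radius satisfies ρ((I ⊗ (CA⁻¹B))D) < 1, where I is the n×n identity matrix and ⊗ is the Kronecker product, then for every F ∈ ℝ^{n×n} the new generalized absolute value matrix equation AX + B|CX| = F has exactly one solution X ∈ ℝ^{n×n}. -/

import Mathlib

open Matrix Kronecker

/-- Componentwise absolute value of a real matrix. -/
noncomputable def matAbs {n : ℕ} (M : Matrix (Fin n) (Fin n) ℝ) : Matrix (Fin n) (Fin n) ℝ :=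
  fun i j => |M i j|

/-- Spectral radius of a real square matrix: the supremum of |λ| over its complex
eigenvalues (the complex spectrum of the matrix viewed over ℂ). -/
noncomputable def specRad {m : Type*} [Fintype m] [DecidableEq m]
    (M : Matrix m m ℝ) : ℝ :=
  sSup ((fun z : ℂ => ‖z‖) '' spectrum ℂ (M.map Complex.ofReal))

/-- Hadamard-type product: `(hadam d Z) a b = d (b, a) * Z a b`. -/
def hadam {n : ℕ} (d : Fin n × Fin n → ℝ) (Z : Matrix (Fin n) (Fin n) ℝ) :
    Matrix (Fin n) (Fin n) ℝ := fun a b => d (b, a) * Z a b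

lemma specRad_ge_one_of_neg_one_eigen {m : Type*} [Fintype m] [DecidableEq m]
    (K : Matrix m m ℝ) (v : m → ℝ) (hv : v ≠ 0) (heig : K.mulVec v = -v) :
    1 ≤ specRad K := by
  set K' := K.map Complex.ofReal with hK'
  set w : m → ℂ := fun p => (v p : ℂ) with hw
  have hw0 : w ≠ 0 := by
    intro h
    apply hv
    funext p
    have := congrFun h p
    simpa [hw] using this
  have hmul : K'.mulVec w = -w := by
    funext p
    have := congrFun heig p
    simp only [mulVec, dotProduct] at this ⊢
    have : ((∑ q, K p q * v q : ℝ) : ℂ) = ((-v p : ℝ) : ℂ) := by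
      rw [this]; simp
    push_cast at this
    simpa [hK', hw, Matrix.map_apply] using this
  have hspec : (-1 : ℂ) ∈ spectrum ℂ K' := by
    rw [spectrum.mem_iff]
    intro hunit
    obtain ⟨u, hu⟩ := hunit
    have h1 : ((↑u⁻¹ : Matrix m m ℂ) * (algebraMap ℂ (Matrix m m ℂ) (-1) - K')) = 1 := by
      rw [← hu]; exact u.inv_mul
    have h2 : (algebraMap ℂ (Matrix m m ℂ) (-1) - K').mulVec w = 0 := by
      rw [Algebra.algebraMap_eq_smul_one, Matrix.sub_mulVec, hmul,
        Matrix.smul_mulVec, Matrix.one_mulVec]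
      simp
    have h3 : w = 0 := by
      calc w = (1 : Matrix m m ℂ).mulVec w := by rw [Matrix.one_mulVec]
      _ = (((↑u⁻¹ : Matrix m m ℂ) * (algebraMap ℂ (Matrix m m ℂ) (-1) - K'))).mulVec w := by
          rw [h1]
      _ = (↑u⁻¹ : Matrix m m ℂ).mulVec ((algebraMap ℂ (Matrix m m ℂ) (-1) - K').mulVec w) := by
          rw [← Matrix.mulVec_mulVec]
      _ = 0 := by rw [h2, Matrix.mulVec_zero]
    exact hw0 h3
  -- boundedness of the spectrum: roots of charpoly
  have hroot : ∀ μ ∈ spectrum ℂ K', K'.charpoly.IsRoot μ := by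
    intro μ hμ
    rw [spectrum.mem_iff] at hμ
    have hdet : (algebraMap ℂ (Matrix m m ℂ) μ - K').det = 0 := by
      by_contra hd
      exact hμ ((Matrix.isUnit_iff_isUnit_det _).mpr (isUnit_iff_ne_zero.mpr hd))
    have hmapcm : (charmatrix K').map (Polynomial.evalRingHom μ) =
        algebraMap ℂ (Matrix m m ℂ) μ - K' := by
      ext i j
      by_cases hij : i = j
      · subst hij
        simp [Matrix.algebraMap_matrix_apply]
      · simp [hij, Matrix.algebraMap_matrix_apply]
    have : K'.charpoly.eval μ = 0 := by
      have := (Polynomial.evalRingHom μ).map_det (charmatrix K')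
      rw [RingHom.mapMatrix_apply, hmapcm, hdet] at this
      simpa [Matrix.charpoly] using this
    exact this
  have hfin : ((fun z : ℂ => ‖z‖) '' spectrum ℂ K').Finite := by
    have hne : K'.charpoly ≠ 0 := (Matrix.charpoly_monic K').ne_zero
    exact ((Polynomial.finite_setOf_isRoot hne).subset hroot).image _
  have hmem : (1 : ℝ) ∈ (fun z : ℂ => ‖z‖) '' spectrum ℂ K' := by
    refine ⟨-1, hspec, by simp⟩
  exact le_csSup hfin.bddAbove hmem

lemma key_injective {n : ℕ} (M : Matrix (Fin n) (Fin n) ℝ)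
    (h : ∀ d : Fin n × Fin n → ℝ, (∀ i, d i ∈ Set.Icc (-1 : ℝ) 1) →
      specRad (((1 : Matrix (Fin n) (Fin n) ℝ) ⊗ₖ M) * Matrix.diagonal d) < 1)
    (d : Fin n × Fin n → ℝ) (hd : ∀ i, |d i| ≤ 1)
    (Z : Matrix (Fin n) (Fin n) ℝ) (hZ : Z + M * hadam d Z = 0) : Z = 0 := by
  by_contra hZ0
  set K : Matrix (Fin n × Fin n) (Fin n × Fin n) ℝ :=
    ((1 : Matrix (Fin n) (Fin n) ℝ) ⊗ₖ M) * Matrix.diagonal d with hK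
  set v : Fin n × Fin n → ℝ := fun p => Z p.2 p.1 with hv
  have hv0 : v ≠ 0 := by
    intro hc
    apply hZ0
    funext a b
    exact congrFun hc (b, a)
  have heig : K.mulVec v = -v := by
    funext p
    obtain ⟨i, j⟩ := p
    have hMZ : (M * hadam d Z) j i = -Z j i := by
      have := congrFun (congrFun hZ j) i
      simp only [Matrix.add_apply, Matrix.zero_apply] at this
      linarith
    calc (K.mulVec v) (i, j)
        = ∑ q : Fin n × Fin n, (((1 : Matrix (Fin n) (Fin n) ℝ) ⊗ₖ M) * Matrix.diagonal d)
            (i, j) q * v q := rfl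
      _ = ∑ q : Fin n × Fin n, (((1 : Matrix (Fin n) (Fin n) ℝ) ⊗ₖ M) (i, j) q * d q) * v q := by
          refine Finset.sum_congr rfl fun q _ => ?_
          rw [Matrix.mul_apply]
          congr 1
          rw [Finset.sum_eq_single q]
          · simp [Matrix.diagonal_apply_eq]
          · intro b _ hb
            simp [Matrix.diagonal_apply_ne _ hb]
          · simp
      _ = ∑ k : Fin n, ∑ l : Fin n,
            (((1 : Matrix (Fin n) (Fin n) ℝ) (i) (k) * M j l) * d (k, l)) * v (k, l) := by
          rw [Fintype.sum_prod_type]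
          rfl
      _ = ∑ l : Fin n, M j l * (d (i, l) * Z l i) := by
          rw [Finset.sum_comm]
          refine Finset.sum_congr rfl fun l _ => ?_
          rw [Finset.sum_eq_single i]
          · simp [hv]; ring
          · intro k _ hk
            simp [Matrix.one_apply_ne' hk]
          · simp
      _ = (M * hadam d Z) j i := by rw [Matrix.mul_apply]; rfl
      _ = (-v) (i, j) := by rw [hMZ]; rfl
  have h1 := specRad_ge_one_of_neg_one_eigen K v hv0 heig
  have h2 := h d (fun i => Set.mem_Icc.mpr (abs_le.mp (hd i)))
  rw [← hK] at h2
  linarith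

section Analysis

attribute [local instance] Matrix.normedAddCommGroup Matrix.normedSpace

/-- sign-quotient vector for a pair of matrices -/
noncomputable def dOf {n : ℕ} (Y₁ Y₂ : Matrix (Fin n) (Fin n) ℝ) : Fin n × Fin n → ℝ :=
  fun p => if Y₁ p.2 p.1 = Y₂ p.2 p.1 then 0
    else (|Y₁ p.2 p.1| - |Y₂ p.2 p.1|) / (Y₁ p.2 p.1 - Y₂ p.2 p.1)

lemma dOf_abs_le {n : ℕ} (Y₁ Y₂ : Matrix (Fin n) (Fin n) ℝ) (p : Fin n × Fin n) :
    |dOf Y₁ Y₂ p| ≤ 1 := by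
  unfold dOf
  split_ifs with h
  · simp
  · rw [abs_div]
    have hne : Y₁ p.2 p.1 - Y₂ p.2 p.1 ≠ 0 := sub_ne_zero.mpr h
    have hpos : 0 < |Y₁ p.2 p.1 - Y₂ p.2 p.1| := abs_pos.mpr hne
    rw [div_le_one hpos]
    exact abs_abs_sub_abs_le_abs_sub _ _

lemma hadam_dOf {n : ℕ} (Y₁ Y₂ : Matrix (Fin n) (Fin n) ℝ) :
    hadam (dOf Y₁ Y₂) (Y₁ - Y₂) = matAbs Y₁ - matAbs Y₂ := by
  funext a b
  show dOf Y₁ Y₂ (b, a) * (Y₁ - Y₂) a b = (matAbs Y₁ - matAbs Y₂) a b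
  simp only [Matrix.sub_apply, dOf, matAbs]
  split_ifs with h
  · simp [h]
  · exact div_mul_cancel₀ _ (sub_ne_zero.mpr h)

lemma hadam_smul {n : ℕ} (d : Fin n × Fin n → ℝ) (s : ℝ) (Z : Matrix (Fin n) (Fin n) ℝ) :
    hadam d (s • Z) = s • hadam d Z := by
  funext a b
  show d (b, a) * (s • Z) a b = (s • hadam d Z) a b
  simp [hadam, Matrix.smul_apply]
  ring

lemma smul_hadam {n : ℕ} (d : Fin n × Fin n → ℝ) (t : ℝ) (Z : Matrix (Fin n) (Fin n) ℝ) :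
    t • hadam d Z = hadam (fun p => t * d p) Z := by
  funext a b
  show (t • hadam d Z) a b = (fun p => t * d p) (b, a) * Z a b
  simp [hadam, Matrix.smul_apply]
  ring

lemma exists_unique_sol {n : ℕ} (hn : 0 < n) (M : Matrix (Fin n) (Fin n) ℝ)
    (hKey : ∀ d : Fin n × Fin n → ℝ, (∀ i, |d i| ≤ 1) →
      ∀ Z : Matrix (Fin n) (Fin n) ℝ, Z + M * hadam d Z = 0 → Z = 0) :
    ∀ G : Matrix (Fin n) (Fin n) ℝ,
      ∃! Y : Matrix (Fin n) (Fin n) ℝ, Y + M * matAbs Y = G := by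
  classical
  haveI : Nonempty (Fin n) := ⟨⟨0, hn⟩⟩
  haveI : Nontrivial (Matrix (Fin n) (Fin n) ℝ) := inferInstance
  -- the compact set and the minimum c
  set S : Set ((Fin n × Fin n → ℝ) × Matrix (Fin n) (Fin n) ℝ) :=
    (Set.Icc (fun _ => (-1 : ℝ)) (fun _ => 1)) ×ˢ Metric.sphere (0 : Matrix (Fin n) (Fin n) ℝ) 1
    with hS
  have hScompact : IsCompact S := (isCompact_Icc).prod (isCompact_sphere _ _)
  have hSne : S.Nonempty := by
    obtain ⟨Z₀, hZ₀⟩ := (NormedSpace.sphere_nonempty (E := Matrix (Fin n) (Fin n) ℝ) (x := 0) (r := 1)).mpr zero_le_one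
    exact ⟨((fun _ => 0), Z₀), Set.mem_prod.mpr ⟨Set.mem_Icc.mpr ⟨by intro i; norm_num,
      by intro i; norm_num⟩, hZ₀⟩⟩
  have hcont : Continuous (fun q : (Fin n × Fin n → ℝ) × Matrix (Fin n) (Fin n) ℝ =>
      ‖q.2 + M * hadam q.1 q.2‖) := by
    apply Continuous.norm
    apply Continuous.add continuous_snd
    apply Continuous.matrix_mul continuous_const
    apply continuous_matrix
    intro a b
    exact ((continuous_apply (b, a)).comp continuous_fst).mul
      ((continuous_snd.matrix_elem a b))
  obtain ⟨⟨d₀, Z₀⟩, hmem₀, hmin'⟩ :=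
    hScompact.exists_isMinOn hSne hcont.continuousOn
  have hmin : ∀ q ∈ S, ‖Z₀ + M * hadam d₀ Z₀‖ ≤ ‖q.2 + M * hadam q.1 q.2‖ :=
    fun q hq => hmin' hq
  set c : ℝ := ‖Z₀ + M * hadam d₀ Z₀‖ with hc
  have hd₀ : ∀ i, |d₀ i| ≤ 1 := by
    intro i
    have := (Set.mem_prod.mp hmem₀).1
    rw [Set.mem_Icc] at this
    exact abs_le.mpr ⟨this.1 i, this.2 i⟩
  have hZ₀s : ‖Z₀‖ = 1 := by
    have := (Set.mem_prod.mp hmem₀).2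
    simpa using this
  have hcpos : 0 < c := by
    rw [hc]
    rw [norm_pos_iff]
    intro hcontra
    have : Z₀ = 0 := hKey d₀ hd₀ Z₀ (by rw [hcontra])
    rw [this] at hZ₀s
    simp at hZ₀s
  -- the uniform lower bound
  have lb : ∀ d : Fin n × Fin n → ℝ, (∀ i, |d i| ≤ 1) →
      ∀ Z : Matrix (Fin n) (Fin n) ℝ, c * ‖Z‖ ≤ ‖Z + M * hadam d Z‖ := by
    intro d hd Z
    rcases eq_or_ne Z 0 with rfl | hZ
    · have h0 : hadam d (0 : Matrix (Fin n) (Fin n) ℝ) = 0 := by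
        funext a b; simp [hadam]
      simp [h0]
    · set u := ‖Z‖⁻¹ • Z with hu
      have hZpos : (0 : ℝ) < ‖Z‖ := norm_pos_iff.mpr hZ
      have hus : ‖u‖ = 1 := by
        rw [hu, norm_smul]
        simp [abs_of_pos (inv_pos.mpr hZpos)]
        field_simp
      have humem : (d, u) ∈ S := by
        refine Set.mem_prod.mpr ⟨Set.mem_Icc.mpr ⟨fun i => ?_, fun i => ?_⟩, by simp [hus]⟩
        · exact (abs_le.mp (hd i)).1
        · exact (abs_le.mp (hd i)).2
      have h1 : c ≤ ‖u + M * hadam d u‖ := hmin (d, u) humem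
      have hZu : Z = ‖Z‖ • u := by
        rw [hu, smul_smul]
        field_simp
        rw [one_smul]
      have h3 : ‖Z‖ • u = Z := by
        rw [hu, smul_smul, mul_inv_cancel₀ (ne_of_gt hZpos), one_smul]
      have h4 : M * hadam d u = ‖Z‖⁻¹ • (M * hadam d Z) := by
        rw [hu, hadam_smul, Matrix.mul_smul]
      have h5 : (‖Z‖ : ℝ) • (u + M * hadam d u) = Z + M * hadam d Z := by
        rw [smul_add, h3, h4, smul_smul, mul_inv_cancel₀ (ne_of_gt hZpos), one_smul]
      calc c * ‖Z‖ ≤ ‖u + M * hadam d u‖ * ‖Z‖ := by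
            exact mul_le_mul_of_nonneg_right h1 (le_of_lt hZpos)
        _ = ‖Z‖ * ‖u + M * hadam d u‖ := by ring
        _ = ‖(‖Z‖ : ℝ) • (u + M * hadam d u)‖ := by
            rw [norm_smul]; simp [abs_of_pos hZpos]
        _ = ‖Z + M * hadam d Z‖ := by rw [h5]
  -- difference identity
  have diffeq : ∀ (t : ℝ) (Y₁ Y₂ : Matrix (Fin n) (Fin n) ℝ),
      (Y₁ + t • (M * matAbs Y₁)) - (Y₂ + t • (M * matAbs Y₂))
        = (Y₁ - Y₂) + M * hadam (fun p => t * dOf Y₁ Y₂ p) (Y₁ - Y₂) := by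
    intro t Y₁ Y₂
    have h1 : hadam (fun p => t * dOf Y₁ Y₂ p) (Y₁ - Y₂) = t • (matAbs Y₁ - matAbs Y₂) := by
      rw [← smul_hadam, hadam_dOf]
    rw [h1, Matrix.mul_smul, Matrix.mul_sub, smul_sub]
    abel
  have diff : ∀ t : ℝ, |t| ≤ 1 → ∀ Y₁ Y₂ : Matrix (Fin n) (Fin n) ℝ,
      c * ‖Y₁ - Y₂‖ ≤ ‖(Y₁ + t • (M * matAbs Y₁)) - (Y₂ + t • (M * matAbs Y₂))‖ := by
    intro t ht Y₁ Y₂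
    rw [diffeq]
    apply lb
    intro i
    calc |t * dOf Y₁ Y₂ i| = |t| * |dOf Y₁ Y₂ i| := abs_mul _ _
      _ ≤ 1 * 1 := mul_le_mul ht (dOf_abs_le _ _ _) (abs_nonneg _) zero_le_one
      _ = 1 := mul_one 1
  -- operator bound for left multiplication by M
  let lmulLin : Matrix (Fin n) (Fin n) ℝ →ₗ[ℝ] Matrix (Fin n) (Fin n) ℝ :=
    { toFun := fun W => M * W
      map_add' := fun x y => Matrix.mul_add M x y
      map_smul' := fun s x => Matrix.mul_smul M s x }
  obtain ⟨L, hLpos, hLb'⟩ :=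
    SemilinearMapClass.bound_of_continuous lmulLin (LinearMap.continuous_of_finiteDimensional _)
  have hL0 : (0:ℝ) ≤ L := hLpos.le
  have hLb : ∀ W : Matrix (Fin n) (Fin n) ℝ, ‖M * W‖ ≤ L * ‖W‖ := by
    intro W
    have := hLb' W
    simpa [lmulLin] using this
  have habs : ∀ Y₁ Y₂ : Matrix (Fin n) (Fin n) ℝ, ‖matAbs Y₁ - matAbs Y₂‖ ≤ ‖Y₁ - Y₂‖ := by
    intro Y₁ Y₂
    rw [Matrix.norm_le_iff (norm_nonneg _)]
    intro i j
    have h1 : ‖(Y₁ - Y₂) i j‖ ≤ ‖Y₁ - Y₂‖ := Matrix.norm_entry_le_entrywise_sup_norm _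
    have h2 : |(|Y₁ i j| - |Y₂ i j|)| ≤ |Y₁ i j - Y₂ i j| := abs_abs_sub_abs_le_abs_sub _ _
    have h3 : ‖(matAbs Y₁ - matAbs Y₂) i j‖ = |(|Y₁ i j| - |Y₂ i j|)| := by
      simp [Matrix.sub_apply, matAbs, Real.norm_eq_abs]
    have h4 : ‖(Y₁ - Y₂) i j‖ = |Y₁ i j - Y₂ i j| := by
      simp [Matrix.sub_apply, Real.norm_eq_abs]
    rw [h3]
    calc |(|Y₁ i j| - |Y₂ i j|)| ≤ |Y₁ i j - Y₂ i j| := h2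
      _ = ‖(Y₁ - Y₂) i j‖ := h4.symm
      _ ≤ ‖Y₁ - Y₂‖ := h1
  set r : ℝ := c / (2 * (L + 1)) with hrdef
  have hrpos : 0 < r := div_pos hcpos (by linarith)
  -- the continuation step
  have step : ∀ t s : ℝ, t ∈ Set.Icc (0:ℝ) 1 → s ∈ Set.Icc (0:ℝ) 1 → |s - t| ≤ r →
      Function.Surjective (fun Y : Matrix (Fin n) (Fin n) ℝ => Y + t • (M * matAbs Y)) →
      Function.Surjective (fun Y : Matrix (Fin n) (Fin n) ℝ => Y + s • (M * matAbs Y)) := by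
    intro t s ht hs hst hsurj G
    choose ψ hψ using hsurj
    simp only [] at hψ
    have hψL : ∀ a b, ‖ψ a - ψ b‖ ≤ c⁻¹ * ‖a - b‖ := by
      intro a b
      have h1 := diff t (abs_le.mpr ⟨by linarith [ht.1], ht.2⟩) (ψ a) (ψ b)
      rw [hψ a, hψ b] at h1
      rw [← mul_le_mul_iff_right₀ hcpos]
      calc c * ‖ψ a - ψ b‖ ≤ ‖a - b‖ := h1
        _ = c * (c⁻¹ * ‖a - b‖) := by field_simp
    set g : Matrix (Fin n) (Fin n) ℝ → Matrix (Fin n) (Fin n) ℝ :=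
      fun Y => ψ (G - (s - t) • (M * matAbs Y)) with hg
    have hcontr : ∀ Y₁ Y₂, dist (g Y₁) (g Y₂) ≤ (1/2 : ℝ) * dist Y₁ Y₂ := by
      intro Y₁ Y₂
      rw [dist_eq_norm, dist_eq_norm]
      have e1 : (G - (s - t) • (M * matAbs Y₁)) - (G - (s - t) • (M * matAbs Y₂))
          = (s - t) • (M * (matAbs Y₂ - matAbs Y₁)) := by
        rw [Matrix.mul_sub, smul_sub]
        abel
      calc ‖g Y₁ - g Y₂‖
          ≤ c⁻¹ * ‖(G - (s - t) • (M * matAbs Y₁)) - (G - (s - t) • (M * matAbs Y₂))‖ :=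
            hψL _ _
        _ = c⁻¹ * (|s - t| * ‖M * (matAbs Y₂ - matAbs Y₁)‖) := by
            rw [e1, norm_smul, Real.norm_eq_abs]
        _ ≤ c⁻¹ * (r * ((L + 1) * ‖matAbs Y₂ - matAbs Y₁‖)) := by
            apply mul_le_mul_of_nonneg_left _ (inv_nonneg.mpr hcpos.le)
            apply mul_le_mul hst _ (norm_nonneg _) hrpos.le
            calc ‖M * (matAbs Y₂ - matAbs Y₁)‖ ≤ L * ‖matAbs Y₂ - matAbs Y₁‖ := hLb _
              _ ≤ (L + 1) * ‖matAbs Y₂ - matAbs Y₁‖ := by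
                  apply mul_le_mul_of_nonneg_right (by linarith) (norm_nonneg _)
        _ ≤ c⁻¹ * (r * ((L + 1) * ‖Y₂ - Y₁‖)) := by
            apply mul_le_mul_of_nonneg_left _ (inv_nonneg.mpr hcpos.le)
            apply mul_le_mul_of_nonneg_left _ hrpos.le
            exact mul_le_mul_of_nonneg_left (habs _ _) (by linarith)
        _ = (1/2 : ℝ) * ‖Y₂ - Y₁‖ := by
            rw [hrdef]
            field_simp
        _ = (1/2 : ℝ) * ‖Y₁ - Y₂‖ := by rw [norm_sub_rev]
    have hlip : LipschitzWith (1/2 : NNReal) g := by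
      apply LipschitzWith.of_dist_le_mul
      intro x y
      have := hcontr x y
      calc dist (g x) (g y) ≤ (1/2 : ℝ) * dist x y := this
        _ = ((1/2 : NNReal) : ℝ) * dist x y := by norm_num
    have hcw : ContractingWith (1/2 : NNReal) g := ⟨by rw [← NNReal.coe_lt_coe]; norm_num, hlip⟩
    let Y := ContractingWith.fixedPoint g hcw
    have hYfix : g Y = Y := hcw.fixedPoint_isFixedPt
    refine ⟨Y, ?_⟩
    have h1 : Y + t • (M * matAbs Y) = G - (s - t) • (M * matAbs Y) := by
      conv_lhs => rw [← hYfix]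
      rw [hg]
      simp only []
      rw [hψ]
    show Y + s • (M * matAbs Y) = G
    have h2 : t • (M * matAbs Y) + (s - t) • (M * matAbs Y) = s • (M * matAbs Y) := by
      rw [← add_smul]
      ring_nf
    calc Y + s • (M * matAbs Y) = (Y + t • (M * matAbs Y)) + (s - t) • (M * matAbs Y) := by
          rw [add_assoc, h2]
      _ = (G - (s - t) • (M * matAbs Y)) + (s - t) • (M * matAbs Y) := by rw [h1]
      _ = G := by abel
  -- induction along [0, 1]
  have main : ∀ k : ℕ, ∀ t : ℝ, t ∈ Set.Icc (0:ℝ) 1 → t ≤ (k : ℝ) * r →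
      Function.Surjective (fun Y : Matrix (Fin n) (Fin n) ℝ => Y + t • (M * matAbs Y)) := by
    intro k
    induction k with
    | zero =>
      intro t ht h0
      have ht0 : t = 0 := le_antisymm (by simpa using h0) ht.1
      subst ht0
      intro G
      exact ⟨G, by simp⟩
    | succ k ih =>
      intro t ht hk
      by_cases hle : t ≤ (k : ℝ) * r
      · exact ih t ht hle
      · push_neg at hle
        have hkr : t ≤ (k : ℝ) * r + r := by
          have : ((k + 1 : ℕ) : ℝ) * r = (k : ℝ) * r + r := by push_cast; ring
          linarith [hk.trans_eq this]
        set t' : ℝ := max (t - r) 0 with ht'def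
        have ht'mem : t' ∈ Set.Icc (0:ℝ) 1 := by
          constructor
          · exact le_max_right _ _
          · apply max_le _ zero_le_one
            linarith [ht.2, hrpos.le]
        have ht'k : t' ≤ (k : ℝ) * r := by
          apply max_le
          · linarith
          · positivity
        have ht't : |t - t'| ≤ r := by
          rw [abs_le]
          constructor
          · have : t' ≤ t := max_le (by linarith) ht.1
            linarith
          · have : t - r ≤ t' := le_max_left _ _
            linarith
        exact step t' t ht'mem ht ht't (ih t' ht'mem ht'k)
  obtain ⟨k, hkge⟩ := exists_nat_ge (1 / r)
  have h1r : (1:ℝ) ≤ (k : ℝ) * r := by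
    rw [div_le_iff₀ hrpos] at hkge
    linarith
  have hsurj1 := main k 1 ⟨zero_le_one, le_refl 1⟩ h1r
  intro G
  obtain ⟨Y, hY⟩ := hsurj1 G
  simp only [one_smul] at hY
  refine ⟨Y, hY, ?_⟩
  intro Y' hY'
  by_contra hne
  have h2 := diff 1 (by norm_num) Y' Y
  rw [one_smul, one_smul, hY', hY] at h2
  simp only [sub_self, norm_zero] at h2
  have h3 : 0 < ‖Y' - Y‖ := norm_pos_iff.mpr (sub_ne_zero.mpr hne)
  nlinarith

end Analysis

/-- If A, C are invertible and ρ((I ⊗ (CA⁻¹B))D) < 1 for every diagonal matrix D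
with diagonal entries in [−1, 1], then for every F the NGAVME AX + B|CX| = F has
exactly one solution. -/
theorem ngavme_unique_of_specRad_diag {n : ℕ} (A B C : Matrix (Fin n) (Fin n) ℝ)
    (hA : IsUnit A) (hC : IsUnit C)
    (h : ∀ d : Fin n × Fin n → ℝ, (∀ i, d i ∈ Set.Icc (-1 : ℝ) 1) →
      specRad (((1 : Matrix (Fin n) (Fin n) ℝ) ⊗ₖ (C * A⁻¹ * B)) * Matrix.diagonal d) < 1) :
    ∀ F : Matrix (Fin n) (Fin n) ℝ,
      ∃! X : Matrix (Fin n) (Fin n) ℝ, A * X + B * matAbs (C * X) = F := by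
  rcases Nat.eq_zero_or_pos n with hn0 | hn
  · subst hn0
    intro F
    have hall : ∀ X Y : Matrix (Fin 0) (Fin 0) ℝ, X = Y := by
      intro X Y
      ext i j
      exact i.elim0
    exact ⟨0, hall _ _, fun y _ => hall y 0⟩
  · set M := C * A⁻¹ * B with hM
    have hAd : IsUnit A.det := (Matrix.isUnit_iff_isUnit_det A).mp hA
    have hCd : IsUnit C.det := (Matrix.isUnit_iff_isUnit_det C).mp hC
    have cancelC : ∀ W : Matrix (Fin n) (Fin n) ℝ, C * (C⁻¹ * W) = W :=
      fun W => Matrix.mul_nonsing_inv_cancel_left C W hCd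
    have cancelC' : ∀ W : Matrix (Fin n) (Fin n) ℝ, C⁻¹ * (C * W) = W :=
      fun W => Matrix.nonsing_inv_mul_cancel_left C W hCd
    have cancelA : ∀ W : Matrix (Fin n) (Fin n) ℝ, A * (A⁻¹ * W) = W :=
      fun W => Matrix.mul_nonsing_inv_cancel_left A W hAd
    have cancelA' : ∀ W : Matrix (Fin n) (Fin n) ℝ, A⁻¹ * (A * W) = W :=
      fun W => Matrix.nonsing_inv_mul_cancel_left A W hAd
    have hKey : ∀ d : Fin n × Fin n → ℝ, (∀ i, |d i| ≤ 1) →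
        ∀ Z : Matrix (Fin n) (Fin n) ℝ, Z + M * hadam d Z = 0 → Z = 0 :=
      fun d hd Z hZ => key_injective M h d hd Z hZ
    have main := exists_unique_sol hn M hKey
    intro F
    obtain ⟨Y, hY, hYu⟩ := main (C * A⁻¹ * F)
    refine ⟨C⁻¹ * Y, ?_, ?_⟩
    · show A * (C⁻¹ * Y) + B * matAbs (C * (C⁻¹ * Y)) = F
      rw [cancelC]
      have h2 := congrArg (fun W => A * (C⁻¹ * W)) hY
      simp only [mul_add, hM, Matrix.mul_assoc] at h2
      simp only [cancelC', cancelA, cancelA'] at h2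
      exact h2
    · intro X' hX'
      have hYX' : C * X' + M * matAbs (C * X') = C * A⁻¹ * F := by
        have h2 := congrArg (fun W => C * (A⁻¹ * W)) hX'
        simp only [mul_add, Matrix.mul_assoc] at h2
        simp only [cancelA'] at h2
        simp only [hM, Matrix.mul_assoc]
        exact h2
      have hCXY : C * X' = Y := hYu (C * X') hYX'
      calc X' = C⁻¹ * (C * X') := (cancelC' X').symm
        _ = C⁻¹ * Y := by rw [hCXY]
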